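/- Let λ be a nonzero element of the finite field F with λ² = 1, let m ≥ 1, and let g be a monic divisor of x^m − λ in F[x]. Let C ⊆ F^m be the λ-constacyclic code corresponding to the ideal of F[x]/(x^m − λ) generated by g. Then C is LCD (C ∩ C^⊥ = {0}) if and only if g is self-reciprocal and coprime to (x^m − λ)/g in F[x]. -/

import Mathlib

open Polynomial

-- coefficient of the "vector polynomial"
lemma coeffP {F : Type*} [Semiring F] (m : ℕ) (b : Fin m → F) (j : ℕ) :
    (∑ k : Fin m, C (b k) * X ^ (k : ℕ)).coeff j
      = if hj : j < m then b ⟨j, hj⟩ else 0 := by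
  rw [finset_sum_coeff]
  simp only [coeff_C_mul, coeff_X_pow]
  split
  · next hj =>
    rw [Finset.sum_eq_single (⟨j, hj⟩ : Fin m)]
    · simp
    · intro k _ hk
      simp only [mul_ite, mul_one, mul_zero, ite_eq_right_iff]
      intro h; exact absurd (Fin.ext h.symm) hk
    · simp
  · next hj =>
    apply Finset.sum_eq_zero
    intro k _
    simp only [mul_ite, mul_one, mul_zero, ite_eq_right_iff]
    intro h; exact absurd (h ▸ k.isLt) hj

lemma degP {F : Type*} [Semiring F] (m : ℕ) (hm : 1 ≤ m) (b : Fin m → F) :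
    (∑ k : Fin m, C (b k) * X ^ (k : ℕ)).degree < (m : WithBot ℕ) := by
  rw [degree_lt_iff_coeff_zero]
  intro j hj
  rw [coeffP, dif_neg (by omega)]

-- reconstruction: any polynomial of degree < m is P of its coefficients
lemma reconP {F : Type*} [Semiring F] (m : ℕ) (p : Polynomial F) (hp : p.degree < (m : ℕ)) :
    (∑ k : Fin m, C (p.coeff k) * X ^ (k : ℕ)) = p := by
  ext j
  rw [coeffP]
  split
  · rfl
  · next hj =>
    exact (coeff_eq_zero_of_degree_lt (lt_of_lt_of_le hp (by exact_mod_cast Nat.le_of_not_lt hj))).symm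

-- Identity I : dot product as a coefficient of p * reflect (m-1) q
lemma dot_eq {F : Type*} [CommSemiring F] (m : ℕ) (hm : 1 ≤ m) (p q : Polynomial F) :
    ∑ k ∈ Finset.range m, p.coeff k * q.coeff k
      = (p * reflect (m - 1) q).coeff (m - 1) := by
  rw [coeff_mul, Finset.Nat.sum_antidiagonal_eq_sum_range_succ_mk]
  rw [Nat.succ_eq_add_one, Nat.sub_add_cancel hm]
  apply Finset.sum_congr rfl
  intro k hk
  rw [Finset.mem_range] at hk
  rw [coeff_reflect, revAt_le (by omega)]
  congr 2
  omega

-- Step B: membership in the quotient ideal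
lemma memB {F : Type*} [CommRing F] (f g q : Polynomial F) (hgf : g ∣ f) :
    Ideal.Quotient.mk (Ideal.span {f}) q ∈
        Ideal.span {Ideal.Quotient.mk (Ideal.span {f}) g} ↔ g ∣ q := by
  rw [Ideal.mem_span_singleton]
  constructor
  · rintro ⟨r, hr⟩
    obtain ⟨r', hr'⟩ := Ideal.Quotient.mk_surjective r
    rw [← hr', ← map_mul] at hr
    have := Ideal.Quotient.eq.mp hr
    rw [Ideal.mem_span_singleton] at this
    obtain ⟨s, hs⟩ := this
    have : q = g * r' + f * s := by linear_combination hs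
    rw [this]
    exact dvd_add (Dvd.intro _ rfl) (hgf.mul_right s)
  · rintro ⟨r, hr⟩
    exact ⟨Ideal.Quotient.mk _ r, by rw [hr, map_mul]⟩

lemma rev_f {F : Type*} [Field F] (lam : F) (hlam2 : lam ^ 2 = 1)
    (m : ℕ) (hm : 1 ≤ m) :
    (X ^ m - C lam : Polynomial F).reverse = C (-lam) * (X ^ m - C lam) := by
  have h2 : (C lam : Polynomial F) * C lam = 1 := by
    rw [← map_mul, ← pow_two, hlam2, map_one]
  have hnd : (X ^ m - C lam : Polynomial F).natDegree = m := natDegree_X_pow_sub_C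
  have hrw : (X ^ m - C lam : Polynomial F) = X ^ m + C (-lam) * X ^ 0 := by
    simp only [map_neg, pow_zero, mul_one]; ring
  rw [reverse, hnd, hrw, reflect_add, reflect_monomial, reflect_C_mul_X_pow,
    revAt_le (le_refl m), revAt_le (Nat.zero_le m), Nat.sub_self, Nat.sub_zero]
  simp only [map_neg]
  linear_combination -h2

lemma perp_iff {F : Type*} [Field F] (lam : F) (hlam2 : lam ^ 2 = 1)
    (m : ℕ) (hm : 1 ≤ m) (g h : Polynomial F) (hgh : g * h = X ^ m - C lam)
    (p : Polynomial F) (hp : p.degree < (m : WithBot ℕ)) :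
    (∀ q : Polynomial F, q.degree < (m : WithBot ℕ) → g ∣ q →
        ∑ k ∈ Finset.range m, p.coeff k * q.coeff k = 0) ↔ h.reverse ∣ p := by
  have hlamne : lam ≠ 0 := fun h0 => by simp [h0] at hlam2
  have hfne : (X ^ m - C lam : Polynomial F) ≠ 0 := X_pow_sub_C_ne_zero hm lam
  have hg0 : g ≠ 0 := fun h0 => hfne (by rw [← hgh, h0, zero_mul])
  have hh0 : h ≠ 0 := fun h0 => hfne (by rw [← hgh, h0, mul_zero])
  set d := g.natDegree with hd
  set e := h.natDegree with he
  have hde : d + e = m := by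
    rw [hd, he, ← natDegree_mul hg0 hh0, hgh, natDegree_X_pow_sub_C]
  have hfc0 : (X ^ m - C lam : Polynomial F).coeff 0 = -lam := by
    simp only [coeff_sub, coeff_X_pow, coeff_C, if_pos rfl, if_neg (by omega : ¬(0 = m))]
    simp
  have hghc0 : g.coeff 0 * h.coeff 0 = -lam := by
    rw [← mul_coeff_zero, hgh, hfc0]
  have hgc0 : g.coeff 0 ≠ 0 := fun h0 => hlamne (by simpa [h0] using hghc0.symm)
  have hhc0 : h.coeff 0 ≠ 0 := fun h0 => hlamne (by simpa [h0] using hghc0.symm)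
  have hrevh_nd : h.reverse.natDegree = e := by
    rw [reverse_natDegree, natTrailingDegree_eq_zero.mpr (Or.inr hhc0), Nat.sub_zero]
  have hrevh0 : h.reverse ≠ 0 := fun h0 => hh0 (reverse_eq_zero.mp h0)
  have hghrev : g.reverse * h.reverse = C (-lam) * (X ^ m - C lam) := by
    rw [← reverse_mul_of_domain, hgh, rev_f lam hlam2 m hm]
  have h2 : (C lam : Polynomial F) * C lam = 1 := by
    rw [← map_mul, ← pow_two, hlam2, map_one]
  constructor
  · -- LCD direction: orthogonality to all multiples of g gives h.reverse ∣ p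
    intro H
    have key : ∀ j, d ≤ j → j < m → (p * g.reverse).coeff j = 0 := by
      intro j hj1 hj2
      have hdm : d ≤ m - 1 := by omega
      have hs : j - d ≤ m - 1 - d := by omega
      have hq : (X ^ (j - d) * g).degree < (m : WithBot ℕ) := by
        rw [degree_lt_iff_coeff_zero]
        intro N hN
        rw [X_pow_mul, coeff_mul_X_pow']
        split
        · exact coeff_eq_zero_of_natDegree_lt (by omega)
        · rfl
      have := H (X ^ (j - d) * g) hq ⟨X ^ (j - d), mul_comm _ _⟩
      rw [dot_eq m hm] at this
      have hrefl : reflect (m - 1) (X ^ (j - d) * g)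
          = X ^ (m - 1 - d - (j - d)) * g.reverse := by
        have := reflect_mul (X ^ (j - d)) g
          (F := m - 1 - d) (G := d) (by simpa using hs) (le_refl d)
        rw [show m - 1 - d + d = m - 1 by omega] at this
        rw [this, reflect_monomial, revAt_le hs, reverse]
      rw [hrefl, show p * (X ^ (m - 1 - d - (j - d)) * g.reverse)
          = (p * g.reverse) * X ^ (m - 1 - d - (j - d)) by ring,
        coeff_mul_X_pow', if_pos (by omega),
        show m - 1 - (m - 1 - d - (j - d)) = j by omega] at this
      exact this
    set PG := p * g.reverse with hPG
    set A := PG %ₘ X ^ m with hA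
    set B := PG /ₘ X ^ m with hB
    have hAB : A + X ^ m * B = PG := modByMonic_add_div PG (X ^ m)
    have hAdeg : A.degree < (d : WithBot ℕ) := by
      rw [degree_lt_iff_coeff_zero]
      intro j hj
      by_cases hjm : j < m
      · have h1 : (X ^ m * B).coeff j = 0 := by
          rw [X_pow_mul, coeff_mul_X_pow', if_neg (by omega)]
        have h3 := congrArg (fun r => r.coeff j) hAB
        simp only [coeff_add, h1, add_zero] at h3
        rw [h3]
        exact key j hj hjm
      · refine coeff_eq_zero_of_degree_lt (lt_of_lt_of_le
          (degree_modByMonic_lt PG (monic_X_pow m)) ?_)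
        rw [degree_X_pow]
        exact_mod_cast Nat.le_of_not_lt hjm
    have hmain : X ^ m * (C (-lam) * p - B * h.reverse) = A * h.reverse - p := by
      have h1 : (A + X ^ m * B) * h.reverse = p * (g.reverse * h.reverse) := by
        rw [hAB]; ring
      rw [hghrev] at h1
      simp only [map_neg] at h1 ⊢
      linear_combination -h1 - p * h2
    have hz : C (-lam) * p - B * h.reverse = 0 := by
      by_contra hne
      have hlhs : (m : WithBot ℕ) ≤ (X ^ m * (C (-lam) * p - B * h.reverse)).degree := by
        rw [degree_mul, degree_X_pow]
        exact le_add_of_nonneg_right (zero_le_degree_iff.mpr hne)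
      have hrhs : (A * h.reverse - p).degree < (m : WithBot ℕ) := by
        refine lt_of_le_of_lt (degree_sub_le _ _) (max_lt ?_ hp)
        rw [degree_mul]
        calc A.degree + h.reverse.degree < (d : WithBot ℕ) + (e : ℕ) := by
              refine WithBot.add_lt_add_of_lt_of_le (by simp [hh0]) hAdeg ?_
              rw [← hrevh_nd]; exact degree_le_natDegree
          _ = (m : WithBot ℕ) := by rw [← Nat.cast_add, hde]
      rw [hmain] at hlhs
      exact absurd (lt_of_le_of_lt hlhs hrhs) (lt_irrefl _)
    refine ⟨C (-lam) * B, ?_⟩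
    have := sub_eq_zero.mp hz
    simp only [map_neg] at this ⊢
    linear_combination -C lam * this - p * h2
  · -- converse: h.reverse ∣ p implies orthogonality
    rintro ⟨w, hw⟩ q hq ⟨u, hu⟩
    by_cases hq0 : q = 0
    · simp [hq0]
    by_cases hp0 : p = 0
    · simp [hp0]
    have hw0 : w ≠ 0 := fun h0 => hp0 (by rw [hw, h0, mul_zero])
    have hu0 : u ≠ 0 := fun h0 => hq0 (by rw [hu, h0, mul_zero])
    have hpnd : p.natDegree ≤ m - 1 := by
      have := (natDegree_lt_iff_degree_lt hp0).mpr hp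
      omega
    have hqnd : q.natDegree ≤ m - 1 := by
      have := (natDegree_lt_iff_degree_lt hq0).mpr hq
      omega
    have hwnd : e + w.natDegree ≤ m - 1 := by
      have := natDegree_mul hrevh0 hw0
      rw [← hw, hrevh_nd] at this
      omega
    have hund : d + u.natDegree ≤ m - 1 := by
      have := natDegree_mul hg0 hu0
      rw [← hu] at this
      omega
    set U := reflect (m - 1 - d) u with hU
    have hUnd : U.natDegree ≤ m - 1 - d := by
      rw [natDegree_le_iff_coeff_eq_zero]
      intro N hN
      rw [hU, coeff_reflect, ← revAtFun_eq, revAtFun, if_neg (by omega)]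
      exact coeff_eq_zero_of_natDegree_lt (by omega)
    have hrefl : reflect (m - 1) q = g.reverse * U := by
      have := reflect_mul g u (F := d) (G := m - 1 - d) (le_refl d) (by omega)
      rw [show d + (m - 1 - d) = m - 1 by omega] at this
      rw [hu, this, reverse]
    rw [dot_eq m hm, hrefl, hw,
      show h.reverse * w * (g.reverse * U) = (g.reverse * h.reverse) * (w * U) by ring,
      hghrev]
    have hwU : (w * U).natDegree < m - 1 := by
      refine lt_of_le_of_lt (natDegree_mul_le) ?_
      omega
    rw [show C (-lam) * (X ^ m - C lam) * (w * U)
        = (C (-lam) * (w * U)) * X ^ m - C (-lam) * (C lam * (w * U)) by ring]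
    rw [coeff_sub, coeff_mul_X_pow', if_neg (by omega), coeff_C_mul, coeff_C_mul]
    rw [coeff_eq_zero_of_natDegree_lt hwU]
    ring

lemma copC {F : Type*} [Field F] (g : Polynomial F) (u : F) (hu : u ≠ 0) :
    IsCoprime g (C u) :=
  ⟨0, C u⁻¹, by simp [← map_mul, inv_mul_cancel₀ hu]⟩

lemma lcd_iff {F : Type*} [Field F] (lam : F) (hlam2 : lam ^ 2 = 1)
    (m : ℕ) (hm : 1 ≤ m) (g h : Polynomial F) (hgh : g * h = X ^ m - C lam) :
    (∀ p : Polynomial F, p.degree < (m : WithBot ℕ) → g ∣ p → h.reverse ∣ p → p = 0)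
      ↔ IsCoprime g h.reverse := by
  classical
  have hlamne : lam ≠ 0 := fun h0 => by simp [h0] at hlam2
  have hfne : (X ^ m - C lam : Polynomial F) ≠ 0 := X_pow_sub_C_ne_zero hm lam
  have hg0 : g ≠ 0 := fun h0 => hfne (by rw [← hgh, h0, zero_mul])
  have hh0 : h ≠ 0 := fun h0 => hfne (by rw [← hgh, h0, mul_zero])
  set d := g.natDegree with hd
  set e := h.natDegree with he
  have hde : d + e = m := by
    rw [hd, he, ← natDegree_mul hg0 hh0, hgh, natDegree_X_pow_sub_C]
  have hghc0 : g.coeff 0 * h.coeff 0 = -lam := by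
    rw [← mul_coeff_zero, hgh]
    simp only [coeff_sub, coeff_X_pow, coeff_C, if_pos rfl, if_neg (by omega : ¬(0 = m))]
    simp
  have hhc0 : h.coeff 0 ≠ 0 := fun h0 => hlamne (by simpa [h0] using hghc0.symm)
  have hrevh_nd : h.reverse.natDegree = e := by
    rw [reverse_natDegree, natTrailingDegree_eq_zero.mpr (Or.inr hhc0), Nat.sub_zero]
  have hrevh0 : h.reverse ≠ 0 := fun h0 => hh0 (reverse_eq_zero.mp h0)
  constructor
  · intro H
    by_contra hnc
    set E := EuclideanDomain.gcd g h.reverse with hE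
    have hE0 : E ≠ 0 := fun h0 =>
      hg0 ((EuclideanDomain.gcd_eq_zero_iff.mp h0).1)
    have hEu : ¬IsUnit E := fun hu => hnc (EuclideanDomain.gcd_isUnit_iff.mp hu)
    have hEnd : 1 ≤ E.natDegree := by
      by_contra h0
      push_neg at h0
      exact hEu (isUnit_iff_degree_eq_zero.mpr
        (by rw [degree_eq_natDegree hE0, Nat.lt_one_iff.mp h0, Nat.cast_zero]))
    obtain ⟨t, ht⟩ := EuclideanDomain.gcd_dvd_right g h.reverse
    obtain ⟨s, hs⟩ := EuclideanDomain.gcd_dvd_left g h.reverse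
    have ht0 : t ≠ 0 := fun h0 => hrevh0 (by rw [ht, h0, mul_zero])
    have hp0 : g * t ≠ 0 := mul_ne_zero hg0 ht0
    have htnd : E.natDegree + t.natDegree = e := by
      rw [← hrevh_nd, ht, natDegree_mul hE0 ht0]
    have hdeg : (g * t).degree < (m : WithBot ℕ) := by
      rw [← natDegree_lt_iff_degree_lt hp0, natDegree_mul hg0 ht0]
      omega
    have := H (g * t) hdeg (Dvd.intro _ rfl) ⟨s, by linear_combination t * hs - s * ht⟩
    exact hp0 this
  · intro hc p hlt hgp hhp
    by_contra hp0
    have hdvd := hc.mul_dvd hgp hhp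
    have h1 := natDegree_le_of_dvd hdvd hp0
    rw [natDegree_mul hg0 hrevh0, hrevh_nd] at h1
    rw [← natDegree_lt_iff_degree_lt hp0] at hlt
    omega

lemma coprime_iff {F : Type*} [Field F] (lam : F) (hlam2 : lam ^ 2 = 1)
    (m : ℕ) (hm : 1 ≤ m) (g h : Polynomial F) (hgh : g * h = X ^ m - C lam) :
    IsCoprime g h.reverse
      ↔ ((∃ α : F, α ≠ 0 ∧ g = C α * g.reverse) ∧ IsCoprime g h) := by
  have hlamne : lam ≠ 0 := fun h0 => by simp [h0] at hlam2
  have hfne : (X ^ m - C lam : Polynomial F) ≠ 0 := X_pow_sub_C_ne_zero hm lam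
  have hg0 : g ≠ 0 := fun h0 => hfne (by rw [← hgh, h0, zero_mul])
  have hh0 : h ≠ 0 := fun h0 => hfne (by rw [← hgh, h0, mul_zero])
  have hghc0 : g.coeff 0 * h.coeff 0 = -lam := by
    rw [← mul_coeff_zero, hgh]
    simp only [coeff_sub, coeff_X_pow, coeff_C, if_pos rfl,
      if_neg (by omega : ¬(0 = m))]
    simp
  have hgc0 : g.coeff 0 ≠ 0 := fun h0 => hlamne (by simpa [h0] using hghc0.symm)
  have hrevg_nd : g.reverse.natDegree = g.natDegree := by
    rw [reverse_natDegree, natTrailingDegree_eq_zero.mpr (Or.inr hgc0), Nat.sub_zero]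
  have hrevg0 : g.reverse ≠ 0 := fun h0 => hg0 (reverse_eq_zero.mp h0)
  have hghrev : g.reverse * h.reverse = C (-lam) * (g * h) := by
    rw [← reverse_mul_of_domain, hgh, rev_f lam hlam2 m hm]
  constructor
  · intro hc
    have hdvd : g ∣ g.reverse := by
      refine hc.dvd_of_dvd_mul_right ⟨C (-lam) * h, ?_⟩
      rw [hghrev]; ring
    obtain ⟨w, hwg⟩ := hdvd
    have hw0 : w ≠ 0 := fun h0 => hrevg0 (by rw [hwg, h0, mul_zero])
    have hwnd : w.natDegree = 0 := by
      have := natDegree_mul hg0 hw0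
      rw [← hwg, hrevg_nd] at this
      omega
    obtain ⟨c, hc'⟩ := natDegree_eq_zero.mp hwnd
    have hcne : c ≠ 0 := fun h0 => hw0 (by rw [← hc', h0, map_zero])
    refine ⟨⟨c⁻¹, inv_ne_zero hcne, ?_⟩, ?_⟩
    · rw [hwg, ← hc', ← mul_assoc, mul_comm (C c⁻¹) g, mul_assoc, ← map_mul,
        inv_mul_cancel₀ hcne, map_one, mul_one]
    · -- h = C (-lam)⁻¹ * C c * h.reverse  (up to unit), transfer coprimality
      have hkey : g * (C c * h.reverse) = g * (C (-lam) * h) := by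
        rw [show g * (C c * h.reverse) = (g * C c) * h.reverse by ring, hc', ← hwg,
          hghrev]
        ring
      have h3 : C c * h.reverse = C (-lam) * h := mul_left_cancel₀ hg0 hkey
      have h4 : h = C ((-lam)⁻¹ * c) * h.reverse := by
        rw [map_mul]
        have hlne : (-lam : F) ≠ 0 := neg_ne_zero.mpr hlamne
        rw [show (C ((-lam)⁻¹) * C c : Polynomial F) * h.reverse
            = C ((-lam)⁻¹) * (C c * h.reverse) by ring, h3, ← mul_assoc, ← map_mul,
          inv_mul_cancel₀ hlne, map_one, one_mul]
      rw [h4]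
      exact (copC g _ (mul_ne_zero (inv_ne_zero (neg_ne_zero.mpr hlamne)) hcne)).mul_right hc
  · rintro ⟨⟨α, hα0, hα⟩, hcop⟩
    have hrevg : g.reverse = C α⁻¹ * g := by
      conv_rhs => rw [hα]
      rw [← mul_assoc, ← map_mul, inv_mul_cancel₀ hα0, map_one, one_mul]
    have hkey : g * (C α⁻¹ * h.reverse) = g * (C (-lam) * h) := by
      rw [show g * (C α⁻¹ * h.reverse) = (C α⁻¹ * g) * h.reverse by ring, ← hrevg,
        hghrev]
      ring
    have h3 : C α⁻¹ * h.reverse = C (-lam) * h := mul_left_cancel₀ hg0 hkey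
    have h4 : h.reverse = C (α * -lam) * h := by
      rw [map_mul]
      rw [show (C α * C (-lam) : Polynomial F) * h = C α * (C (-lam) * h) by ring, ← h3,
        ← mul_assoc, ← map_mul, mul_inv_cancel₀ hα0, map_one, one_mul]
    rw [h4]
    exact (copC g _ (mul_ne_zero hα0 (neg_ne_zero.mpr hlamne))).mul_right hcop

lemma dotsum {F : Type*} [CommSemiring F] (m : ℕ) (a b : Fin m → F) :
    ∑ k ∈ Finset.range m,
        (∑ k : Fin m, C (a k) * X ^ (k : ℕ)).coeff k *
        (∑ k : Fin m, C (b k) * X ^ (k : ℕ)).coeff k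
      = ∑ k : Fin m, a k * b k := by
  rw [← Fin.sum_univ_eq_sum_range]
  apply Finset.sum_congr rfl
  intro k _
  rw [coeffP, coeffP, dif_pos k.isLt, dif_pos k.isLt]

theorem stmt6 (F : Type*) [Field F] [Fintype F]
    (lam : F) (hlam0 : lam ≠ 0) (hlam2 : lam ^ 2 = 1)
    (m : ℕ) (hm : 1 ≤ m)
    (f : Polynomial F) (hf : f = X ^ m - C lam)
    (g : Polynomial F) (hgmonic : g.Monic) (hgdvd : g ∣ f)
    -- the coefficient identification of F^m with F[x]/(x^m − λ)
    (blk : (Fin m → F) → Polynomial F ⧸ Ideal.span {f})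
    (hblk : ∀ b, blk b
      = Ideal.Quotient.mk (Ideal.span {f}) (∑ k : Fin m, C (b k) * X ^ (k : ℕ))) :
    -- C is LCD iff g is self-reciprocal and coprime to f/g
    ((∀ a : Fin m → F,
        blk a ∈ Ideal.span {Ideal.Quotient.mk (Ideal.span {f}) g} →
        (∀ b : Fin m → F, blk b ∈ Ideal.span {Ideal.Quotient.mk (Ideal.span {f}) g} →
          ∑ k, a k * b k = 0) →
        a = 0)
      ↔ (∃ α : F, α ≠ 0 ∧ g = Polynomial.C α * g.reverse) ∧ IsCoprime g (f / g)) := by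
  set h := f / g with hh
  have hg0 : g ≠ 0 := hgmonic.ne_zero
  have hgh : g * h = X ^ m - C lam := by
    rw [hh, EuclideanDomain.mul_div_cancel' hg0 hgdvd, hf]
  have main_iff : (∀ a : Fin m → F,
        blk a ∈ Ideal.span {Ideal.Quotient.mk (Ideal.span {f}) g} →
        (∀ b : Fin m → F, blk b ∈ Ideal.span {Ideal.Quotient.mk (Ideal.span {f}) g} →
          ∑ k, a k * b k = 0) →
        a = 0)
      ↔ (∀ p : Polynomial F, p.degree < (m : WithBot ℕ) → g ∣ p → h.reverse ∣ p → p = 0) := by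
    constructor
    · intro HL p hlt hgp hhp
      set a : Fin m → F := fun k => p.coeff k with ha
      have hPa : (∑ k : Fin m, C (a k) * X ^ (k : ℕ)) = p := reconP m p hlt
      have h1 : a = 0 := by
        refine HL a ?_ ?_
        · rw [hblk, memB f g _ hgdvd, hPa]
          exact hgp
        · intro b hb
          rw [hblk, memB f g _ hgdvd] at hb
          have := (perp_iff lam hlam2 m hm g h hgh p hlt).mpr hhp
            (∑ k : Fin m, C (b k) * X ^ (k : ℕ)) (degP m hm b) hb
          rw [← dotsum m a b, hPa]
          exact this
      rw [← hPa, h1]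
      simp
    · intro LCD a hmem hperp
      set p := ∑ k : Fin m, C (a k) * X ^ (k : ℕ) with hp
      have hlt : p.degree < (m : WithBot ℕ) := degP m hm a
      have hgp : g ∣ p := by
        rw [hblk, memB f g _ hgdvd] at hmem
        exact hmem
      have hhp : h.reverse ∣ p := by
        refine (perp_iff lam hlam2 m hm g h hgh p hlt).mp ?_
        intro q hq hgq
        set b : Fin m → F := fun k => q.coeff k with hb
        have hPb : (∑ k : Fin m, C (b k) * X ^ (k : ℕ)) = q := reconP m q hq
        have := hperp b (by rw [hblk, memB f g _ hgdvd, hPb]; exact hgq)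
        rw [← dotsum m a b, hPb] at this
        exact this
      have hp0 : p = 0 := LCD p hlt hgp hhp
      funext k
      have h2 := coeffP m a (k : ℕ)
      rw [dif_pos k.isLt] at h2
      rw [← hp, hp0, coeff_zero] at h2
      simpa using h2.symm
  rw [main_iff, lcd_iff lam hlam2 m hm g h hgh, coprime_iff lam hlam2 m hm g h hgh]
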